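/- Let E be a finite-dimensional real inner product space and W : E → ℝ twice continuously differentiable with constants 0 < γ ≤ L such that γ‖ξ‖² ≤ D²W(x)[ξ, ξ] ≤ L‖ξ‖² for all x, ξ ∈ E. Let a* be the unique global minimizer of W. Fix 0 < ρ ≤ 1/2 and 0 < σ < 1/2, and define a sequence (aⁿ) by: a⁰ ∈ E given; if the Newton direction δⁿ at aⁿ is zero set aⁿ⁺¹ = aⁿ, otherwise aⁿ⁺¹ = aⁿ + τⁿδⁿ where τⁿ is the backtracking step size. Then for all n ≥ 0: W(aⁿ) − W(a*) ≤ qⁿ (W(a⁰) − W(a*)), with contraction factor q = 1 − 4ρσ(1 − σ)γ³/L³ < 1. -/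

import Mathlib

open scoped RealInnerProductSpace

lemma taylor_upper {E : Type*} [NormedAddCommGroup E] [NormedSpace ℝ E]
    (W : E → ℝ) (c : ℝ) (hW : ContDiff ℝ 2 W)
    (hB : ∀ x v : E, fderiv ℝ (fderiv ℝ W) x v v ≤ c * ‖v‖ ^ 2) (x v : E) :
    W (x + v) ≤ W x + fderiv ℝ W x v + c / 2 * ‖v‖ ^ 2 := by
  have hdiff : Differentiable ℝ W := hW.differentiable (by norm_num)
  have hF : Differentiable ℝ (fderiv ℝ W) :=
    (hW.fderiv_right (m := 1) (by norm_num)).differentiable (by norm_num)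
  have hline : ∀ t : ℝ, HasDerivAt (fun s : ℝ => x + s • v) v t := by
    intro t
    simpa using ((hasDerivAt_id t).smul_const v).const_add x
  have hD1 : ∀ t : ℝ, HasDerivAt (fun s : ℝ => W (x + s • v)) (fderiv ℝ W (x + t • v) v) t :=
    fun t => (hdiff (x + t • v)).hasFDerivAt.comp_hasDerivAt t (hline t)
  have hD2 : ∀ t : ℝ, HasDerivAt (fun s : ℝ => fderiv ℝ W (x + s • v) v)
      (fderiv ℝ (fderiv ℝ W) (x + t • v) v v) t := by
    intro t
    have h := HasDerivAt.clm_apply (c := fun s : ℝ => fderiv ℝ W (x + s • v)) (u := fun _ => v)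
      ((hF (x + t • v)).hasFDerivAt.comp_hasDerivAt t (hline t)) (hasDerivAt_const t v)
    simpa using h
  have hstep1 : ∀ t ∈ Set.Icc (0:ℝ) 1,
      fderiv ℝ W (x + t • v) v ≤ fderiv ℝ W x v + c * ‖v‖ ^ 2 * t := by
    intro t ht
    have hk : ∀ s : ℝ, HasDerivAt (fun u : ℝ => fderiv ℝ W (x + u • v) v - c * ‖v‖ ^ 2 * u)
        (fderiv ℝ (fderiv ℝ W) (x + s • v) v v - c * ‖v‖ ^ 2) s := by
      intro s
      exact ((hD2 s).sub ((hasDerivAt_id s).const_mul (c * ‖v‖ ^ 2))).congr_deriv (by simp)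
    have hanti : AntitoneOn (fun u : ℝ => fderiv ℝ W (x + u • v) v - c * ‖v‖ ^ 2 * u)
        (Set.Icc 0 1) := by
      apply antitoneOn_of_deriv_nonpos (convex_Icc 0 1)
      · exact (Differentiable.continuous (fun s => (hk s).differentiableAt)).continuousOn
      · intro s _; exact ((hk s).differentiableAt).differentiableWithinAt
      · intro s _; rw [(hk s).deriv]; have := hB (x + s • v) v; linarith
    have h0 : (0:ℝ) ∈ Set.Icc (0:ℝ) 1 := by constructor <;> norm_num
    have h := hanti h0 ht ht.1
    simp only [zero_smul, add_zero, mul_zero, sub_zero] at h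
    linarith
  have hh : ∀ s : ℝ, HasDerivAt
      (fun u : ℝ => W (x + u • v) - fderiv ℝ W x v * u - c / 2 * ‖v‖ ^ 2 * u ^ 2)
      (fderiv ℝ W (x + s • v) v - fderiv ℝ W x v - c * ‖v‖ ^ 2 * s) s := by
    intro s
    have h2 := ((hD1 s).sub ((hasDerivAt_id s).const_mul (fderiv ℝ W x v))).sub
      ((hasDerivAt_pow 2 s).const_mul (c / 2 * ‖v‖ ^ 2))
    exact h2.congr_deriv (by norm_num; ring)
  have hanti2 : AntitoneOn
      (fun u : ℝ => W (x + u • v) - fderiv ℝ W x v * u - c / 2 * ‖v‖ ^ 2 * u ^ 2)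
      (Set.Icc 0 1) := by
    apply antitoneOn_of_deriv_nonpos (convex_Icc 0 1)
    · exact (Differentiable.continuous (fun s => (hh s).differentiableAt)).continuousOn
    · intro s _; exact ((hh s).differentiableAt).differentiableWithinAt
    · intro s hs
      rw [(hh s).deriv]
      rw [interior_Icc] at hs
      have := hstep1 s ⟨hs.1.le, hs.2.le⟩
      linarith
  have h := hanti2 (by constructor <;> norm_num) (by constructor <;> norm_num) zero_le_one
  simp only [zero_smul, one_smul, add_zero, mul_zero, mul_one, one_pow, sub_zero, zero_pow] at h
  linarith

lemma taylor_lower {E : Type*} [NormedAddCommGroup E] [NormedSpace ℝ E]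
    (W : E → ℝ) (c : ℝ) (hW : ContDiff ℝ 2 W)
    (hB : ∀ x v : E, c * ‖v‖ ^ 2 ≤ fderiv ℝ (fderiv ℝ W) x v v) (x v : E) :
    W x + fderiv ℝ W x v + c / 2 * ‖v‖ ^ 2 ≤ W (x + v) := by
  have e1 : (fderiv ℝ fun y => -W y) = fun y => -fderiv ℝ W y := funext fun y => fderiv_neg
  have hB' : ∀ x v : E, fderiv ℝ (fderiv ℝ (fun y => -W y)) x v v ≤ (-c) * ‖v‖ ^ 2 := by
    intro x v
    rw [e1]
    have e2 : fderiv ℝ (fun y => -fderiv ℝ W y) x = -fderiv ℝ (fderiv ℝ W) x := fderiv_neg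
    rw [e2]
    simp only [ContinuousLinearMap.neg_apply]
    linarith [hB x v]
  have h := taylor_upper (fun y => -W y) (-c) hW.neg hB' x v
  rw [e1] at h
  simp only [ContinuousLinearMap.neg_apply] at h
  linarith

lemma grad_inner {E : Type*} [NormedAddCommGroup E] [InnerProductSpace ℝ E]
    [CompleteSpace E] (W : E → ℝ) (x v : E) :
    ⟪gradient W x, v⟫ = fderiv ℝ W x v := by
  unfold gradient
  exact InnerProductSpace.toDual_symm_apply

set_option maxHeartbeats 4000000 in
/-- Global linear decay of the energy along the damped Newton iteration with Armijo
backtracking: `W(aⁿ) - W(a*) ≤ qⁿ (W(a⁰) - W(a*))` with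
`q = 1 - 4ρσ(1-σ)γ³/L³ < 1`. -/
theorem stmt_11 {E : Type*} [NormedAddCommGroup E] [InnerProductSpace ℝ E]
    [FiniteDimensional ℝ E]
    (W : E → ℝ) (γ L : ℝ) (hγ : 0 < γ) (hγL : γ ≤ L)
    (hW : ContDiff ℝ 2 W)
    (hlow : ∀ x ξ : E, γ * ‖ξ‖ ^ 2 ≤ iteratedFDeriv ℝ 2 W x ![ξ, ξ])
    (hup : ∀ x ξ : E, iteratedFDeriv ℝ 2 W x ![ξ, ξ] ≤ L * ‖ξ‖ ^ 2)
    (astar : E) (hmin : ∀ x : E, W astar ≤ W x)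
    (ρ σ : ℝ) (hρ0 : 0 < ρ) (hρ1 : ρ ≤ 1 / 2) (hσ0 : 0 < σ) (hσ1 : σ < 1 / 2)
    (a : ℕ → E) (δ : ℕ → E) (τ : ℕ → ℝ)
    (hδ : ∀ n, ∀ v : E, iteratedFDeriv ℝ 2 W (a n) ![δ n, v] = -⟪gradient W (a n), v⟫)
    (hstep0 : ∀ n, δ n = 0 → a (n + 1) = a n)
    (hstep : ∀ n, δ n ≠ 0 →
      IsGreatest {t : ℝ | ∃ k : ℕ, t = ρ ^ k ∧
        W (a n + t • δ n) ≤ W (a n) + σ * t * ⟪gradient W (a n), δ n⟫} (τ n) ∧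
      a (n + 1) = a n + τ n • δ n) :
    1 - 4 * ρ * σ * (1 - σ) * γ ^ 3 / L ^ 3 < 1 ∧
    ∀ n : ℕ, W (a n) - W astar ≤
      (1 - 4 * ρ * σ * (1 - σ) * γ ^ 3 / L ^ 3) ^ n * (W (a 0) - W astar) := by
  have hL : 0 < L := lt_of_lt_of_le hγ hγL
  have h1σ : 0 < 1 - σ := by linarith
  have hlow' : ∀ x ξ : E, γ * ‖ξ‖ ^ 2 ≤ fderiv ℝ (fderiv ℝ W) x ξ ξ := by
    intro x ξ
    have h := hlow x ξ
    rw [iteratedFDeriv_two_apply] at h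
    simpa using h
  have hup' : ∀ x ξ : E, fderiv ℝ (fderiv ℝ W) x ξ ξ ≤ L * ‖ξ‖ ^ 2 := by
    intro x ξ
    have h := hup x ξ
    rw [iteratedFDeriv_two_apply] at h
    simpa using h
  have hδ' : ∀ n (v : E), fderiv ℝ (fderiv ℝ W) (a n) (δ n) v = -⟪gradient W (a n), v⟫ := by
    intro n v
    have h := hδ n v
    rw [iteratedFDeriv_two_apply] at h
    simpa using h
  have hF : Differentiable ℝ (fderiv ℝ W) :=
    (hW.fderiv_right (m := 1) (by norm_num)).differentiable (by norm_num)
  have hsymm : ∀ (x u w : E),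
      fderiv ℝ (fderiv ℝ W) x u w = fderiv ℝ (fderiv ℝ W) x w u := fun x u w =>
    second_derivative_symmetric
      (fun z => (hW.differentiable (by norm_num) z).hasFDerivAt) (hF x).hasFDerivAt u w
  have hTU : ∀ x v : E, W (x + v) ≤ W x + ⟪gradient W x, v⟫ + L / 2 * ‖v‖ ^ 2 := by
    intro x v; rw [grad_inner]; exact taylor_upper W L hW hup' x v
  have hTL : ∀ x v : E, W x + ⟪gradient W x, v⟫ + γ / 2 * ‖v‖ ^ 2 ≤ W (x + v) := by
    intro x v; rw [grad_inner]; exact taylor_lower W γ hW hlow' x v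
  have hPL : ∀ x : E, 2 * γ * (W x - W astar) ≤ ‖gradient W x‖ ^ 2 := by
    intro x
    have h := hTL x (astar - x)
    have e : x + (astar - x) = astar := by abel
    rw [e] at h
    have hc := (abs_le.mp (abs_real_inner_le_norm (gradient W x) (astar - x))).1
    have h2 : W x - W astar ≤ ‖gradient W x‖ * ‖astar - x‖ - γ / 2 * ‖astar - x‖ ^ 2 := by
      linarith
    have h3 := mul_le_mul_of_nonneg_left h2 (by positivity : (0:ℝ) ≤ 2 * γ)
    nlinarith [sq_nonneg (‖gradient W x‖ - γ * ‖astar - x‖)]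
  set q : ℝ := 1 - 4 * ρ * σ * (1 - σ) * γ ^ 3 / L ^ 3 with hqdef
  clear_value q
  have hcpos : 0 < 4 * ρ * σ * (1 - σ) * γ ^ 3 / L ^ 3 :=
    div_pos (mul_pos (mul_pos (mul_pos (by linarith) hσ0) h1σ) (pow_pos hγ 3)) (pow_pos hL 3)
  have hq0 : 0 ≤ q := by
    have hfrac1 : γ ^ 3 / L ^ 3 ≤ 1 := by
      rw [div_le_one (pow_pos hL 3)]
      exact pow_le_pow_left₀ hγ.le hγL 3
    have hfrac0 : 0 ≤ γ ^ 3 / L ^ 3 := by positivity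
    have h1 : 4 * ρ * σ * (1 - σ) ≤ 1 / 2 := by nlinarith [sq_nonneg (2 * σ - 1)]
    have h2 : 4 * ρ * σ * (1 - σ) * γ ^ 3 / L ^ 3 ≤ 1 / 2 := by
      rw [mul_div_assoc]
      calc 4 * ρ * σ * (1 - σ) * (γ ^ 3 / L ^ 3) ≤ 4 * ρ * σ * (1 - σ) * 1 := by
            apply mul_le_mul_of_nonneg_left hfrac1
            positivity
        _ ≤ 1 / 2 := by linarith
    rw [hqdef]; linarith
  have key : ∀ n : ℕ, W (a (n + 1)) - W astar ≤ q * (W (a n) - W astar) := by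
    intro n
    by_cases h0 : δ n = 0
    · have hg : gradient W (a n) = 0 := by
        have hz : ∀ v : E, ⟪gradient W (a n), v⟫ = 0 := by
          intro v
          have h := hδ n v
          rw [h0] at h
          have hz2 : iteratedFDeriv ℝ 2 W (a n) ![0, v] = 0 :=
            (iteratedFDeriv ℝ 2 W (a n)).map_coord_zero 0 (by simp)
          rw [hz2] at h
          linarith
        exact inner_self_eq_zero.mp (hz (gradient W (a n)))
      have he : W (a n) - W astar = 0 := by
        have h1 := hPL (a n)
        rw [hg] at h1
        simp at h1
        exact le_antisymm (by nlinarith) (by linarith [hmin (a n)])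
      rw [hstep0 n h0, he, mul_zero]
    · obtain ⟨⟨⟨k, hk, harm⟩, hub⟩, hrec⟩ := hstep n h0
      set g : E := gradient W (a n) with hgdef
      set d : E := δ n with hddef
      set T := fderiv ℝ (fderiv ℝ W) (a n) with hTdef
      have f1 : T d d = -⟪g, d⟫ := hδ' n d
      have f2 : T d g = -(‖g‖ ^ 2) := by
        rw [hδ' n g, real_inner_self_eq_norm_sq]
      have hTlow : ∀ ξ : E, γ * ‖ξ‖ ^ 2 ≤ T ξ ξ := fun ξ => hlow' (a n) ξ
      have hTup : ∀ ξ : E, T ξ ξ ≤ L * ‖ξ‖ ^ 2 := fun ξ => hup' (a n) ξ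
      have hTsymm : ∀ u w : E, T u w = T w u := fun u w => hsymm (a n) u w
      have hPLn := hPL (a n)
      rw [← hgdef] at hPLn
      clear_value g d T
      have hquad : ∀ t : ℝ, 0 ≤ T g g * (t * t) + 2 * T d g * t + T d d := by
        intro t
        have h := hTlow (d + t • g)
        have expand : T (d + t • g) (d + t • g)
            = T g g * (t * t) + 2 * T d g * t + T d d := by
          rw [map_add, map_smul]
          simp only [ContinuousLinearMap.add_apply, ContinuousLinearMap.smul_apply,
            ContinuousLinearMap.map_add, ContinuousLinearMap.map_smul, smul_eq_mul,
            hTsymm g d]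
          ring
        rw [expand] at h
        nlinarith [mul_nonneg hγ.le (sq_nonneg ‖d + t • g‖)]
      have hCS' : ∀ A B C : ℝ, (∀ t : ℝ, 0 ≤ A * (t * t) + 2 * B * t + C) →
          B ^ 2 ≤ A * C := by
        intro A B C h
        have hd := discrim_le_zero h
        rw [discrim] at hd
        nlinarith
      have hCS : (T d g) ^ 2 ≤ T g g * T d d := hCS' _ _ _ hquad
      have hgd : ‖g‖ ^ 2 ≤ L ^ 2 * ‖d‖ ^ 2 := by
        by_cases hgz : g = 0
        · rw [hgz]; simp; positivity
        · have hgpos : 0 < ‖g‖ := norm_pos_iff.mpr hgz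
          have h1 : T g g ≤ L * ‖g‖ ^ 2 := hTup g
          have h2 : T d d ≤ L * ‖d‖ ^ 2 := hTup d
          have h3 : 0 ≤ T g g := le_trans (by positivity) (hTlow g)
          have h4 : 0 ≤ T d d := le_trans (by positivity) (hTlow d)
          have h5 : (‖g‖ ^ 2) ^ 2 ≤ (L * ‖g‖ ^ 2) * (L * ‖d‖ ^ 2) := by
            calc (‖g‖ ^ 2) ^ 2 = (T d g) ^ 2 := by rw [f2]; ring
              _ ≤ T g g * T d d := hCS
              _ ≤ (L * ‖g‖ ^ 2) * (L * ‖d‖ ^ 2) := by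
                  apply mul_le_mul h1 h2 h4 (by positivity)
          exact le_of_mul_le_mul_right (by nlinarith) (by positivity : (0:ℝ) < ‖g‖ ^ 2)
      have hinner : γ * ‖d‖ ^ 2 ≤ -⟪g, d⟫ := by
        rw [← f1]; exact hTlow d
      have hinner2 : γ / L ^ 2 * ‖g‖ ^ 2 ≤ -⟪g, d⟫ := by
        calc γ / L ^ 2 * ‖g‖ ^ 2 ≤ γ / L ^ 2 * (L ^ 2 * ‖d‖ ^ 2) :=
              mul_le_mul_of_nonneg_left hgd (by positivity)
          _ = γ * ‖d‖ ^ 2 := by field_simp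
          _ ≤ -⟪g, d⟫ := hinner
      have hsuff : ∀ t : ℝ, 0 < t → t ≤ 2 * (1 - σ) * γ / L →
          W (a n + t • d) ≤ W (a n) + σ * t * ⟪g, d⟫ := by
        intro t ht0 htb
        have hT := hTU (a n) (t • d)
        rw [inner_smul_right, norm_smul] at hT
        rw [← hgdef] at hT
        have e1 : ‖t‖ = t := by rw [Real.norm_eq_abs, abs_of_pos ht0]
        rw [e1] at hT
        have htL : t * L ≤ 2 * (1 - σ) * γ := by
          rw [le_div_iff₀ hL] at htb
          linarith
        have h2 := mul_le_mul_of_nonneg_left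
          (show ⟪g, d⟫ ≤ -(γ * ‖d‖ ^ 2) by linarith) (mul_pos h1σ ht0).le
        have h3 : L / 2 * (t * ‖d‖) ^ 2 ≤ (1 - σ) * t * (γ * ‖d‖ ^ 2) := by
          nlinarith [mul_nonneg (mul_nonneg (sub_nonneg.mpr htL) ht0.le) (sq_nonneg ‖d‖)]
        nlinarith [hT, h2, h3]
      have hτpos : 0 < τ n := hk ▸ pow_pos hρ0 k
      have hρt1 : ρ * (2 * (1 - σ) * γ / L) ≤ 1 := by
        have hA : 2 * ρ * (1 - σ) ≤ 1 := by nlinarith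
        have hB2 : 2 * ρ * (1 - σ) * γ ≤ L := by nlinarith [mul_le_mul_of_nonneg_right hA hγ.le]
        have e2 : ρ * (2 * (1 - σ) * γ / L) = (2 * ρ * (1 - σ) * γ) / L := by ring
        rw [e2, div_le_one hL]
        exact hB2
      have htbar : 0 < 2 * (1 - σ) * γ / L := by positivity
      have hτlb : ρ * (2 * (1 - σ) * γ / L) ≤ τ n := by
        by_cases hcase : 1 ≤ 2 * (1 - σ) * γ / L
        · have hmem : (1:ℝ) ∈ {t : ℝ | ∃ k : ℕ, t = ρ ^ k ∧
              W (a n + t • d) ≤ W (a n) + σ * t * ⟪g, d⟫} :=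
            ⟨0, by simp, hsuff 1 one_pos hcase⟩
          have := hub hmem
          linarith
        · push_neg at hcase
          have hρlt1 : ρ < 1 := by linarith
          have hex : ∃ m : ℕ, ρ ^ m ≤ 2 * (1 - σ) * γ / L := by
            obtain ⟨m, hm⟩ := exists_pow_lt_of_lt_one htbar hρlt1
            exact ⟨m, hm.le⟩
          have hk0 : ρ ^ (Nat.find hex) ≤ 2 * (1 - σ) * γ / L := Nat.find_spec hex
          have hk0ne : Nat.find hex ≠ 0 := by
            intro h
            rw [h, pow_zero] at hk0
            linarith
          have hprev : ¬ (ρ ^ (Nat.find hex - 1) ≤ 2 * (1 - σ) * γ / L) :=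
            Nat.find_min hex (Nat.sub_lt (Nat.pos_of_ne_zero hk0ne) one_pos)
          push_neg at hprev
          have hmem : ρ ^ (Nat.find hex) ∈ {t : ℝ | ∃ k : ℕ, t = ρ ^ k ∧
              W (a n + t • d) ≤ W (a n) + σ * t * ⟪g, d⟫} :=
            ⟨Nat.find hex, rfl, hsuff _ (pow_pos hρ0 _) hk0⟩
          have h1 := hub hmem
          have h2 : ρ * (2 * (1 - σ) * γ / L) < ρ * ρ ^ (Nat.find hex - 1) :=
            mul_lt_mul_of_pos_left hprev hρ0
          have h3 : ρ * ρ ^ (Nat.find hex - 1) = ρ ^ (Nat.find hex) := by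
            have e3 : Nat.find hex - 1 + 1 = Nat.find hex := by omega
            conv_rhs => rw [← e3, pow_succ]
            ring
          linarith
      have hstepA : σ * τ n * ⟪g, d⟫ ≤ σ * τ n * (-(γ / L ^ 2 * ‖g‖ ^ 2)) :=
        mul_le_mul_of_nonneg_left (by linarith) (by positivity)
      have hX : 0 ≤ γ / L ^ 2 * ‖g‖ ^ 2 := by positivity
      have hstepB : σ * τ n * (-(γ / L ^ 2 * ‖g‖ ^ 2)) ≤
          σ * (ρ * (2 * (1 - σ) * γ / L)) * (-(γ / L ^ 2 * ‖g‖ ^ 2)) := by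
        nlinarith [mul_nonneg (mul_nonneg hσ0.le (sub_nonneg.mpr hτlb)) hX]
      have hchain : W (a (n + 1)) ≤ W (a n)
          + σ * (ρ * (2 * (1 - σ) * γ / L)) * (-(γ / L ^ 2 * ‖g‖ ^ 2)) := by
        rw [hrec]
        calc W (a n + τ n • d) ≤ W (a n) + σ * τ n * ⟪g, d⟫ := harm
          _ ≤ _ := by linarith
      have heq : σ * (ρ * (2 * (1 - σ) * γ / L)) * (-(γ / L ^ 2 * ‖g‖ ^ 2))
          = -(2 * ρ * σ * (1 - σ) * γ ^ 2 / L ^ 3 * ‖g‖ ^ 2) := by ring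
      rw [heq] at hchain
      have hc3 : 0 ≤ 2 * ρ * σ * (1 - σ) * γ ^ 2 / L ^ 3 :=
        div_nonneg (mul_nonneg (mul_nonneg (by positivity) h1σ.le) (sq_nonneg γ))
          (pow_pos hL 3).le
      have hmul := mul_le_mul_of_nonneg_left hPLn hc3
      have hqe : q * (W (a n) - W astar) = (W (a n) - W astar)
          - (2 * ρ * σ * (1 - σ) * γ ^ 2 / L ^ 3) * (2 * γ * (W (a n) - W astar)) := by
        rw [hqdef]; ring
      rw [hqe]
      linarith [hchain, hmul]
  constructor
  · show q < 1
    rw [hqdef]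
    linarith
  · intro n
    induction n with
    | zero => simp
    | succ n ih =>
      calc W (a (n + 1)) - W astar ≤ q * (W (a n) - W astar) := key n
        _ ≤ q * (q ^ n * (W (a 0) - W astar)) := mul_le_mul_of_nonneg_left ih hq0
        _ = q ^ (n + 1) * (W (a 0) - W astar) := by ring
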